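/- Let n ≥ 1 and m ∈ ℝ. Let p : ℝ^n × ℝ^n → ℝ be twice continuously differentiable (C²) on ℝ^n × (ℝ^n \ {0}) and positively homogeneous of degree m in the second variable, i.e. p(x, rξ) = r^m p(x, ξ) for all r > 0, x ∈ ℝ^n, ξ ∈ ℝ^n \ {0}. Let I, J ⊆ ℝ be open intervals with 0 ∈ J, and let x, ξ : J × I → ℝ^n be C² maps with ξ(s,t) ≠ 0 for all (s,t), satisfying Hamilton's equations ∂ₜx(s,t) = ∇_ξ p(x(s,t), ξ(s,t)) and ∂ₜξ(s,t) = −∇ₓp(x(s,t), ξ(s,t)), together with the constraint p(x(s,t), ξ(s,t)) = 0 for all (s,t) ∈ J × I. Then the function t ↦ ⟨ξ(0,t), ∂ₛx(s,t)|_{s=0}⟩ is constant on I, where ⟨·,·⟩ is the Euclidean inner product. -/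

import Mathlib

open Set InnerProductSpace

section Aux

variable {E : Type*} [NormedAddCommGroup E] [InnerProductSpace ℝ E] [CompleteSpace E]

lemma aux_inner_gradient (f : E → ℝ) (x v : E) :
    (inner ℝ (gradient f x) v : ℝ) = fderiv ℝ f x v := by
  simp [gradient, InnerProductSpace.toDual_symm_apply]

lemma aux_grad_fst (p : E × E → ℝ) (z : E × E) (hd : DifferentiableAt ℝ p z) (v : E) :
    (inner ℝ (gradient (fun y => p (y, z.2)) z.1) v : ℝ) = fderiv ℝ p z (v, 0) := by
  have h1 : HasFDerivAt (fun y : E => p (y, z.2))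
      ((fderiv ℝ p z).comp (ContinuousLinearMap.inl ℝ E E)) z.1 := by
    have := hd.hasFDerivAt.comp z.1 (hasFDerivAt_prodMk_left (𝕜 := ℝ) z.1 z.2)
    exact this
  rw [aux_inner_gradient, h1.fderiv]
  rfl

lemma aux_grad_snd (p : E × E → ℝ) (z : E × E) (hd : DifferentiableAt ℝ p z) (v : E) :
    (inner ℝ (gradient (fun η => p (z.1, η)) z.2) v : ℝ) = fderiv ℝ p z (0, v) := by
  have h1 : HasFDerivAt (fun η : E => p (z.1, η))
      ((fderiv ℝ p z).comp (ContinuousLinearMap.inr ℝ E E)) z.2 := by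
    have := hd.hasFDerivAt.comp z.2 (hasFDerivAt_prodMk_right (𝕜 := ℝ) z.1 z.2)
    exact this
  rw [aux_inner_gradient, h1.fderiv]
  rfl

omit [CompleteSpace E] in
lemma aux_euler (m : ℝ) (p : E × E → ℝ)
    (hd : ∀ q : E × E, q.2 ≠ 0 → DifferentiableAt ℝ p q)
    (hhom : ∀ r : ℝ, 0 < r → ∀ x ξ : E, ξ ≠ 0 → p (x, r • ξ) = r ^ m * p (x, ξ))
    (y η : E) (hη : η ≠ 0) :
    fderiv ℝ p (y, η) (0, η) = m * p (y, η) := by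
  have hcurve : HasDerivAt (fun r : ℝ => (y, r • η)) ((0 : E), η) 1 :=
    (hasDerivAt_const (1:ℝ) y).prodMk (by simpa using (hasDerivAt_id (1:ℝ)).smul_const η)
  have hφ : HasDerivAt (fun r : ℝ => p (y, r • η)) (fderiv ℝ p (y, η) (0, η)) 1 := by
    have hd' := (hd (y, η) hη).hasFDerivAt
    have := hd'.comp_hasDerivAt_of_eq 1 hcurve (by simp)
    exact this
  have hψ : HasDerivAt (fun r : ℝ => r ^ m * p (y, η)) (m * p (y, η)) 1 := by
    have := (Real.hasDerivAt_rpow_const (x := (1:ℝ)) (p := m) (Or.inl one_ne_zero)).mul_const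
      (p (y, η))
    simpa using this
  have heq : (fun r : ℝ => p (y, r • η)) =ᶠ[nhds 1] fun r : ℝ => r ^ m * p (y, η) := by
    filter_upwards [isOpen_Ioi.mem_nhds (by norm_num : (1:ℝ) ∈ Ioi (0:ℝ))] with r hr
    exact hhom r hr y η hη
  exact (hφ.congr_of_eventuallyEq heq.symm).unique hψ

end Aux

theorem stmt4 (n : ℕ) (hn : 1 ≤ n) (m : ℝ)
    (p : EuclideanSpace ℝ (Fin n) × EuclideanSpace ℝ (Fin n) → ℝ)
    (hp : ContDiffOn ℝ 2 p {q : EuclideanSpace ℝ (Fin n) × EuclideanSpace ℝ (Fin n) | q.2 ≠ 0})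
    (hhom : ∀ r : ℝ, 0 < r → ∀ x ξ : EuclideanSpace ℝ (Fin n), ξ ≠ 0 →
      p (x, r • ξ) = r ^ m * p (x, ξ))
    (a b c d : ℝ) (hJ0 : (0 : ℝ) ∈ Set.Ioo a b)
    (x ξ : ℝ × ℝ → EuclideanSpace ℝ (Fin n))
    (hx : ContDiffOn ℝ 2 x (Set.Ioo a b ×ˢ Set.Ioo c d))
    (hξ : ContDiffOn ℝ 2 ξ (Set.Ioo a b ×ˢ Set.Ioo c d))
    (hξne : ∀ s ∈ Set.Ioo a b, ∀ t ∈ Set.Ioo c d, ξ (s, t) ≠ 0)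
    (ham1 : ∀ s ∈ Set.Ioo a b, ∀ t ∈ Set.Ioo c d,
      deriv (fun t' => x (s, t')) t = gradient (fun η => p (x (s, t), η)) (ξ (s, t)))
    (ham2 : ∀ s ∈ Set.Ioo a b, ∀ t ∈ Set.Ioo c d,
      deriv (fun t' => ξ (s, t')) t = - gradient (fun y => p (y, ξ (s, t))) (x (s, t)))
    (hnull : ∀ s ∈ Set.Ioo a b, ∀ t ∈ Set.Ioo c d, p (x (s, t), ξ (s, t)) = 0) :
    ∀ t₁ ∈ Set.Ioo c d, ∀ t₂ ∈ Set.Ioo c d,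
      (inner ℝ (ξ (0, t₁)) (deriv (fun s => x (s, t₁)) 0) : ℝ) =
      (inner ℝ (ξ (0, t₂)) (deriv (fun s => x (s, t₂)) 0) : ℝ) := by
  set U : Set (ℝ × ℝ) := Set.Ioo a b ×ˢ Set.Ioo c d with hU_def
  have hU : IsOpen U := isOpen_Ioo.prod isOpen_Ioo
  have hΩ : IsOpen {q : EuclideanSpace ℝ (Fin n) × EuclideanSpace ℝ (Fin n) | q.2 ≠ 0} :=
    isOpen_compl_singleton.preimage continuous_snd
  -- differentiability of p
  have hpC : ∀ q : EuclideanSpace ℝ (Fin n) × EuclideanSpace ℝ (Fin n), q.2 ≠ 0 → ContDiffAt ℝ 2 p q :=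
    fun q hq => hp.contDiffAt (hΩ.mem_nhds hq)
  have hpd : ∀ q : EuclideanSpace ℝ (Fin n) × EuclideanSpace ℝ (Fin n), q.2 ≠ 0 → DifferentiableAt ℝ p q :=
    fun q hq => (hpC q hq).differentiableAt two_ne_zero
  -- basic curves
  have hst : ∀ s t : ℝ, HasDerivAt (fun t' : ℝ => ((s, t') : ℝ × ℝ)) (0, 1) t :=
    fun s t => (hasDerivAt_const t s).prodMk (hasDerivAt_id t)
  have hts : ∀ s t : ℝ, HasDerivAt (fun s' : ℝ => ((s', t) : ℝ × ℝ)) (1, 0) s :=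
    fun s t => (hasDerivAt_id s).prodMk (hasDerivAt_const s t)
  -- differentiability of x and ξ
  have hxC : ∀ z ∈ U, ContDiffAt ℝ 2 x z := fun z hz => hx.contDiffAt (hU.mem_nhds hz)
  have hξC : ∀ z ∈ U, ContDiffAt ℝ 2 ξ z := fun z hz => hξ.contDiffAt (hU.mem_nhds hz)
  have hxd : ∀ z ∈ U, DifferentiableAt ℝ x z :=
    fun z hz => (hxC z hz).differentiableAt two_ne_zero
  have hξd : ∀ z ∈ U, DifferentiableAt ℝ ξ z :=
    fun z hz => (hξC z hz).differentiableAt two_ne_zero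
  have hxt : ∀ z ∈ U, HasDerivAt (fun t' => x (z.1, t')) (fderiv ℝ x z ((0:ℝ), (1:ℝ))) z.2 :=
    fun z hz => by exact (hxd z hz).hasFDerivAt.comp_hasDerivAt z.2 (hst z.1 z.2)
  have hξt : ∀ z ∈ U, HasDerivAt (fun t' => ξ (z.1, t')) (fderiv ℝ ξ z ((0:ℝ), (1:ℝ))) z.2 :=
    fun z hz => by exact (hξd z hz).hasFDerivAt.comp_hasDerivAt z.2 (hst z.1 z.2)
  have hxs : ∀ z ∈ U, HasDerivAt (fun s' => x (s', z.2)) (fderiv ℝ x z ((1:ℝ), (0:ℝ))) z.1 :=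
    fun z hz => by exact (hxd z hz).hasFDerivAt.comp_hasDerivAt z.1 (hts z.1 z.2)
  have hξs : ∀ z ∈ U, HasDerivAt (fun s' => ξ (s', z.2)) (fderiv ℝ ξ z ((1:ℝ), (0:ℝ))) z.1 :=
    fun z hz => by exact (hξd z hz).hasFDerivAt.comp_hasDerivAt z.1 (hts z.1 z.2)
  -- C¹ of fderiv x
  have hx1 : ContDiffOn ℝ 1 (fderiv ℝ x) U := ContDiffOn.fderiv_of_isOpen (m := 1) hx hU (by norm_num)
  have hXd : ∀ z ∈ U, DifferentiableAt ℝ (fderiv ℝ x) z :=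
    fun z hz => ((hx1.contDiffAt (hU.mem_nhds hz)).differentiableAt one_ne_zero)
  -- the function F
  set F : ℝ → ℝ := fun t => inner ℝ (ξ (0, t)) (fderiv ℝ x (0, t) ((1:ℝ), (0:ℝ))) with hF_def
  -- F has derivative 0 on Ioo c d
  have key : ∀ t ∈ Set.Ioo c d, HasDerivAt F 0 t := by
    intro t ht
    have hzU : ((0:ℝ), t) ∈ U := ⟨hJ0, ht⟩
    set z := (x (0, t), ξ (0, t)) with hz_def
    have hzne : z.2 ≠ 0 := hξne 0 hJ0 t ht
    set f'' := fderiv ℝ (fderiv ℝ x) ((0:ℝ), t) with hf''_def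
    have hX2 : HasFDerivAt (fderiv ℝ x) f'' ((0:ℝ), t) := (hXd _ hzU).hasFDerivAt
    -- derivative of t' ↦ fderiv x (0,t') (1,0)
    have hA : HasDerivAt (fun t' => fderiv ℝ x (0, t')) (f'' (0, 1)) t := by
      exact hX2.comp_hasDerivAt t (hst 0 t)
    have hA1 : HasDerivAt (fun t' => fderiv ℝ x (0, t') ((1:ℝ), (0:ℝ)))
        (f'' (0, 1) ((1:ℝ), (0:ℝ))) t := by
      simpa using hA.clm_apply (hasDerivAt_const t ((1:ℝ), (0:ℝ)))
    -- derivative of s ↦ fderiv x (s,t) (0,1)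
    have hB : HasDerivAt (fun s => fderiv ℝ x (s, t) ((0:ℝ), (1:ℝ)))
        (f'' (1, 0) ((0:ℝ), (1:ℝ))) 0 := by
      have hB0 : HasDerivAt (fun s : ℝ => fderiv ℝ x (s, t)) (f'' (1, 0)) 0 := by
        exact hX2.comp_hasDerivAt 0 (hts 0 t)
      simpa using hB0.clm_apply (hasDerivAt_const 0 ((0:ℝ), (1:ℝ)))
    -- symmetry of second derivative
    have hsymm : f'' ((0:ℝ), (1:ℝ)) ((1:ℝ), (0:ℝ)) = f'' ((1:ℝ), (0:ℝ)) ((0:ℝ), (1:ℝ)) :=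
      ((hxC _ hzU).isSymmSndFDerivAt (by simp)) (0, 1) (1, 0)
    -- G s = ∇_ξ p (x(s,t), ξ(s,t))
    set G := fun s => gradient (fun η => p (x (s, t), η)) (ξ (s, t)) with hG_def
    have heqG : (fun s => fderiv ℝ x (s, t) ((0:ℝ), (1:ℝ))) =ᶠ[nhds 0] G := by
      filter_upwards [isOpen_Ioo.mem_nhds hJ0] with s hs
      have := (hxt (s, t) ⟨hs, ht⟩).deriv
      simp only at this
      rw [← this, ham1 s hs t ht]
    have hG : HasDerivAt G (f'' (1, 0) ((0:ℝ), (1:ℝ))) 0 :=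
      hB.congr_of_eventuallyEq heqG.symm
    -- W s = ⟪ξ(s,t), G s⟫ ≡ 0 near 0
    have hWzero : ∀ s ∈ Set.Ioo a b, (inner ℝ (ξ (s, t)) (G s) : ℝ) = 0 := by
      intro s hs
      have hne : ξ (s, t) ≠ 0 := hξne s hs t ht
      have h1 : (inner ℝ (ξ (s, t)) (G s) : ℝ)
          = fderiv ℝ p (x (s, t), ξ (s, t)) (0, ξ (s, t)) := by
        rw [real_inner_comm]
        exact aux_grad_snd p (x (s, t), ξ (s, t)) (hpd _ hne) (ξ (s, t))
      rw [h1, aux_euler m p hpd hhom _ _ hne, hnull s hs t ht, mul_zero]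
    have hW : HasDerivAt (fun s => (inner ℝ (ξ (s, t)) (G s) : ℝ))
        ((inner ℝ (ξ (0, t)) (f'' (1, 0) ((0:ℝ), (1:ℝ))) : ℝ)
          + inner ℝ (fderiv ℝ ξ ((0:ℝ), t) ((1:ℝ), (0:ℝ))) (G 0)) 0 :=
      (hξs _ hzU).inner ℝ hG
    have hW0 : HasDerivAt (fun s => (inner ℝ (ξ (s, t)) (G s) : ℝ)) 0 0 := by
      have : (fun s => (inner ℝ (ξ (s, t)) (G s) : ℝ)) =ᶠ[nhds 0] fun _ => (0:ℝ) := by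
        filter_upwards [isOpen_Ioo.mem_nhds hJ0] with s hs using hWzero s hs
      exact (hasDerivAt_const 0 (0:ℝ)).congr_of_eventuallyEq this
    have hWval : (inner ℝ (ξ (0, t)) (f'' (1, 0) ((0:ℝ), (1:ℝ))) : ℝ)
        = - inner ℝ (fderiv ℝ ξ ((0:ℝ), t) ((1:ℝ), (0:ℝ))) (G 0) := by
      have := hW.unique hW0
      linarith [this]
    -- the null constraint differentiated in s
    have hP : HasDerivAt (fun s => p (x (s, t), ξ (s, t)))
        (fderiv ℝ p z (fderiv ℝ x ((0:ℝ), t) ((1:ℝ), (0:ℝ)),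
          fderiv ℝ ξ ((0:ℝ), t) ((1:ℝ), (0:ℝ)))) 0 :=
      (hpd z hzne).hasFDerivAt.comp_hasDerivAt 0 ((hxs _ hzU).prodMk (hξs _ hzU))
    have hP0 : HasDerivAt (fun s => p (x (s, t), ξ (s, t))) 0 0 := by
      have : (fun s => p (x (s, t), ξ (s, t))) =ᶠ[nhds 0] fun _ => (0:ℝ) := by
        filter_upwards [isOpen_Ioo.mem_nhds hJ0] with s hs using hnull s hs t ht
      exact (hasDerivAt_const 0 (0:ℝ)).congr_of_eventuallyEq this
    have hPval : fderiv ℝ p z (fderiv ℝ x ((0:ℝ), t) ((1:ℝ), (0:ℝ)),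
        fderiv ℝ ξ ((0:ℝ), t) ((1:ℝ), (0:ℝ))) = 0 := hP.unique hP0
    -- ∂ₜξ = -∇ₓp
    have hham2 : fderiv ℝ ξ ((0:ℝ), t) ((0:ℝ), (1:ℝ))
        = - gradient (fun y => p (y, ξ (0, t))) (x (0, t)) := by
      have := (hξt _ hzU).deriv
      simp only at this
      rw [← this, ham2 0 hJ0 t ht]
    -- compute the derivative of F
    have hF' : HasDerivAt F
        ((inner ℝ (ξ (0, t)) (f'' (0, 1) ((1:ℝ), (0:ℝ))) : ℝ)
          + inner ℝ (fderiv ℝ ξ ((0:ℝ), t) ((0:ℝ), (1:ℝ)))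
              (fderiv ℝ x ((0:ℝ), t) ((1:ℝ), (0:ℝ)))) t :=
      (hξt _ hzU).inner ℝ hA1
    have hval : (inner ℝ (ξ (0, t)) (f'' (0, 1) ((1:ℝ), (0:ℝ))) : ℝ)
          + inner ℝ (fderiv ℝ ξ ((0:ℝ), t) ((0:ℝ), (1:ℝ)))
              (fderiv ℝ x ((0:ℝ), t) ((1:ℝ), (0:ℝ))) = 0 := by
      rw [hsymm, hWval, hham2]
      have e1 : (inner ℝ (fderiv ℝ ξ ((0:ℝ), t) ((1:ℝ), (0:ℝ))) (G 0) : ℝ)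
          = fderiv ℝ p z (0, fderiv ℝ ξ ((0:ℝ), t) ((1:ℝ), (0:ℝ))) := by
        rw [real_inner_comm]
        exact aux_grad_snd p z (hpd z hzne) _
      have e2 : (inner ℝ (- gradient (fun y => p (y, ξ (0, t))) (x (0, t)))
            (fderiv ℝ x ((0:ℝ), t) ((1:ℝ), (0:ℝ))) : ℝ)
          = - fderiv ℝ p z (fderiv ℝ x ((0:ℝ), t) ((1:ℝ), (0:ℝ)), 0) := by
        rw [inner_neg_left]
        rw [aux_grad_fst p z (hpd z hzne)]
      rw [e1, e2]
      have e3 : fderiv ℝ p z (fderiv ℝ x ((0:ℝ), t) ((1:ℝ), (0:ℝ)),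
          fderiv ℝ ξ ((0:ℝ), t) ((1:ℝ), (0:ℝ)))
          = fderiv ℝ p z (fderiv ℝ x ((0:ℝ), t) ((1:ℝ), (0:ℝ)), 0)
            + fderiv ℝ p z (0, fderiv ℝ ξ ((0:ℝ), t) ((1:ℝ), (0:ℝ))) := by
        rw [← ContinuousLinearMap.map_add]
        congr 1
        simp [Prod.ext_iff]
      rw [e3] at hPval
      linarith
    rw [hval] at hF'
    exact hF'
  -- constancy of F on Ioo c d
  have hconst : ∀ t₁ ∈ Set.Ioo c d, ∀ t₂ ∈ Set.Ioo c d, F t₁ = F t₂ := by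
    intro t₁ ht₁ t₂ ht₂
    apply (convex_Ioo c d).is_const_of_fderivWithin_eq_zero
      (fun t ht => ((key t ht).differentiableAt).differentiableWithinAt)
      (fun t ht => ?_) ht₁ ht₂
    rw [fderivWithin_of_isOpen isOpen_Ioo ht]
    refine ContinuousLinearMap.ext_ring ?_
    rw [fderiv_apply_one_eq_deriv, (key t ht).deriv]
    rfl
  intro t₁ ht₁ t₂ ht₂
  have h1 : deriv (fun s => x (s, t₁)) 0 = fderiv ℝ x ((0:ℝ), t₁) ((1:ℝ), (0:ℝ)) :=
    (hxs ((0:ℝ), t₁) ⟨hJ0, ht₁⟩).deriv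
  have h2 : deriv (fun s => x (s, t₂)) 0 = fderiv ℝ x ((0:ℝ), t₂) ((1:ℝ), (0:ℝ)) :=
    (hxs ((0:ℝ), t₂) ⟨hJ0, ht₂⟩).deriv
  rw [h1, h2]
  exact hconst t₁ ht₁ t₂ ht₂
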